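/- Let φ : [0,T] → ℝ be differentiable with e^{φ(t)²/2} N(φ(t)) = e^{r(T−t)}/2 for all t ∈ [0,T], and set σ²(t) := −2·φ(t)·φ′(t). Then (i) σ²(t) > 0 for every t ∈ [0,T); (ii) ∫_t^T σ²(s) ds = φ(t)² for every t ∈ [0,T]; and (iii) the boundary formula K·e^{−r(T−t)}·e^{φ(t)²/2} = K/(2·N(φ(t))) holds for every t ∈ [0,T] and every K > 0. -/

import Mathlib

open MeasureTheory Real Set Filter

/-- Standard normal cdf `N(x)`. -/
noncomputable def stdCdf (x : ℝ) : ℝ := ∫ y in Set.Iic x, Real.exp (-y ^ 2 / 2) / Real.sqrt (2 * Real.pi)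

open Topology

noncomputable def gpdf (y : ℝ) : ℝ := Real.exp (-y ^ 2 / 2) / Real.sqrt (2 * Real.pi)

lemma gpdf_cont : Continuous gpdf := by
  unfold gpdf; fun_prop

lemma gpdf_pos (y : ℝ) : 0 < gpdf y := by
  unfold gpdf
  positivity

lemma gpdf_integrable : Integrable gpdf := by
  have h : Integrable (fun y : ℝ => Real.exp (-(1/2) * y ^ 2)) := by
    simpa using integrable_exp_neg_mul_sq (by norm_num : (0:ℝ) < 1/2)
  have := h.div_const (Real.sqrt (2 * Real.pi))
  refine this.congr (Filter.Eventually.of_forall fun y => ?_)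
  unfold gpdf; ring_nf

lemma stdCdf_eq (x : ℝ) : stdCdf x = ∫ y in Set.Iic x, gpdf y := rfl

lemma stdCdf_pos (x : ℝ) : 0 < stdCdf x := by
  rw [stdCdf_eq]
  rw [setIntegral_pos_iff_support_of_nonneg_ae
    (Filter.Eventually.of_forall fun y => (gpdf_pos y).le) gpdf_integrable.integrableOn]
  have : Function.support gpdf = Set.univ := by
    ext y; simp [Function.mem_support, (gpdf_pos y).ne']
  rw [this]
  rw [Set.univ_inter, Real.volume_Iic]; simp

lemma stdCdf_sub (a b : ℝ) : stdCdf b - stdCdf a = ∫ y in a..b, gpdf y := by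
  rw [stdCdf_eq, stdCdf_eq]
  exact intervalIntegral.integral_Iic_sub_Iic gpdf_integrable.integrableOn
    gpdf_integrable.integrableOn

lemma hasDerivAt_stdCdf (x : ℝ) : HasDerivAt stdCdf (gpdf x) x := by
  have h : HasDerivAt (fun u => ∫ y in (0:ℝ)..u, gpdf y) (gpdf x) x :=
    intervalIntegral.integral_hasDerivAt_right gpdf_integrable.intervalIntegrable
      (gpdf_cont.stronglyMeasurableAtFilter _ _) gpdf_cont.continuousAt
  have : stdCdf = fun u => stdCdf 0 + ∫ y in (0:ℝ)..u, gpdf y := by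
    funext u; rw [← stdCdf_sub]; ring
  rw [this]
  simpa using (h.const_add (stdCdf 0))

lemma gpdf_total : ∫ y, gpdf y = 1 := by
  unfold gpdf
  have h : ∀ y : ℝ, Real.exp (-y ^ 2 / 2) = Real.exp (-(1/2) * y ^ 2) := by
    intro y; ring_nf
  simp_rw [h, integral_div, integral_gaussian]
  rw [div_eq_one_iff_eq (by positivity)]
  congr 1
  ring

lemma stdCdf_zero : stdCdf 0 = 1/2 := by
  have hsym : stdCdf 0 = ∫ y in Set.Ioi (0:ℝ), gpdf y := by
    rw [stdCdf_eq]
    have : ∀ y : ℝ, gpdf y = gpdf (-y) := by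
      intro y; unfold gpdf; ring_nf
    calc (∫ y in Set.Iic (0:ℝ), gpdf y) = ∫ y in Set.Iic (0:ℝ), gpdf (-y) := by
          exact setIntegral_congr_fun measurableSet_Iic fun y _ => this y
      _ = ∫ y in Set.Ioi (-(0:ℝ)), gpdf y := integral_comp_neg_Iic 0 gpdf
      _ = ∫ y in Set.Ioi (0:ℝ), gpdf y := by norm_num
  have hadd : stdCdf 0 + ∫ y in Set.Ioi (0:ℝ), gpdf y = 1 := by
    rw [stdCdf_eq, intervalIntegral.integral_Iic_add_Ioi gpdf_integrable.integrableOn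
      gpdf_integrable.integrableOn, gpdf_total]
  rw [hsym] at hadd ⊢
  linarith

lemma stdCdf_gt_half {x : ℝ} (hx : 0 < x) : 1/2 < stdCdf x := by
  have h : stdCdf x - stdCdf 0 = ∫ y in (0:ℝ)..x, gpdf y := stdCdf_sub 0 x
  have hpos : 0 < ∫ y in (0:ℝ)..x, gpdf y :=
    intervalIntegral.intervalIntegral_pos_of_pos gpdf_integrable.intervalIntegrable gpdf_pos hx
  have := stdCdf_zero
  linarith

lemma integral_Iic_comp_sub (a x : ℝ) (f : ℝ → ℝ) :
    ∫ y in Set.Iic x, f (y - a) = ∫ y in Set.Iic (x - a), f y := by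
  have A : MeasurableEmbedding fun y : ℝ => y - a :=
    (Homeomorph.subRight a).isClosedEmbedding.measurableEmbedding
  have hmap : Measure.map (fun y : ℝ => y - a) volume = volume := by
    simp_rw [sub_eq_add_neg]
    exact map_add_right_eq_self volume (-a)
  have := MeasurableEmbedding.setIntegral_map (μ := volume) A f (Set.Iic (x - a))
  rw [hmap] at this
  have hpre : (fun y : ℝ => y - a) ⁻¹' Set.Iic (x - a) = Set.Iic x := by
    ext y; simp [sub_le_sub_iff_right]
  rw [hpre] at this
  exact this.symm

lemma stdCdf_le_of_nonpos {x : ℝ} (hx : x ≤ 0) : stdCdf x ≤ Real.exp (-x^2/2) * (1/2) := by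
  have key : ∀ y ∈ Set.Iic x, gpdf y ≤ Real.exp (-x^2/2) * gpdf (y - x) := by
    intro y hy
    simp only [Set.mem_Iic] at hy
    unfold gpdf
    rw [mul_div_assoc']
    apply div_le_div_of_nonneg_right ?_ (by positivity)
    rw [← Real.exp_add, Real.exp_le_exp]
    nlinarith
  have hint2 : IntegrableOn (fun y => Real.exp (-x^2/2) * gpdf (y - x)) (Set.Iic x) := by
    exact ((gpdf_integrable.comp_sub_right x).const_mul _).integrableOn
  have hmono := setIntegral_mono_on gpdf_integrable.integrableOn hint2 measurableSet_Iic key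
  rw [stdCdf_eq]
  refine hmono.trans_eq ?_
  rw [integral_const_mul, integral_Iic_comp_sub x x gpdf]
  simp [← stdCdf_eq, stdCdf_zero]

-- exp * gpdf identity
lemma exp_mul_gpdf (x : ℝ) : Real.exp (x ^ 2 / 2) * gpdf x = 1 / Real.sqrt (2 * Real.pi) := by
  unfold gpdf
  rw [mul_div_assoc', ← Real.exp_add]
  ring_nf
  rw [Real.exp_zero, one_mul]

theorem volatility_from_phi (r T : ℝ) (hr : 0 < r) (hT : 0 < T)
    (φ φ' : ℝ → ℝ)
    (hderiv : ∀ t ∈ Set.Icc 0 T, HasDerivWithinAt φ (φ' t) (Set.Icc 0 T) t)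
    (heq : ∀ t ∈ Set.Icc 0 T,
      Real.exp ((φ t) ^ 2 / 2) * stdCdf (φ t) = Real.exp (r * (T - t)) / 2) :
    (∀ t, 0 ≤ t → t < T → 0 < -2 * φ t * φ' t) ∧
    (∀ t ∈ Set.Icc 0 T, ∫ s in t..T, -2 * φ s * φ' s = (φ t) ^ 2) ∧
    (∀ K : ℝ, 0 < K → ∀ t ∈ Set.Icc 0 T,
      K * Real.exp (-r * (T - t)) * Real.exp ((φ t) ^ 2 / 2) = K / (2 * stdCdf (φ t))) := by
  have hgeq : ∀ t ∈ Set.Icc 0 T, Real.exp ((φ t) ^ 2 / 2) * stdCdf (φ t)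
      = Real.exp (r * (T - t)) / 2 := heq
  set c := Real.sqrt (2 * Real.pi) with hc
  have hcpos : 0 < c := Real.sqrt_pos.mpr (by positivity)
  -- φ is positive on [0, T)
  have hφpos : ∀ t, 0 ≤ t → t < T → 0 < φ t := by
    intro t ht0 htT
    by_contra h
    push_neg at h
    have hb := stdCdf_le_of_nonpos h
    have hle : Real.exp ((φ t) ^ 2 / 2) * stdCdf (φ t) ≤ 1 / 2 := by
      have := mul_le_mul_of_nonneg_left hb (Real.exp_nonneg ((φ t) ^ 2 / 2))
      calc Real.exp ((φ t) ^ 2 / 2) * stdCdf (φ t)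
          ≤ Real.exp ((φ t) ^ 2 / 2) * (Real.exp (-(φ t) ^ 2 / 2) * (1/2)) := this
        _ = 1 / 2 := by rw [← mul_assoc, ← Real.exp_add]; ring_nf; rw [Real.exp_zero]; ring
    have h2 := heq t ⟨ht0, htT.le⟩
    have : (1:ℝ) < Real.exp (r * (T - t)) := by
      rw [show (1:ℝ) = Real.exp 0 by simp]
      exact Real.exp_lt_exp.mpr (by nlinarith)
    linarith
  -- φ is continuous on [0,T]
  have hφcont : ContinuousOn φ (Set.Icc 0 T) := fun t ht => (hderiv t ht).continuousWithinAt
  -- φ T = 0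
  have hφT : φ T = 0 := by
    have hTmem : T ∈ Set.Icc (0:ℝ) T := ⟨hT.le, le_refl T⟩
    have hnonneg : 0 ≤ φ T := by
      have hcw : ContinuousWithinAt φ (Set.Ico 0 T) T :=
        ((hderiv T hTmem).continuousWithinAt).mono Set.Ico_subset_Icc_self
      have hne : (𝓝[Set.Ico (0:ℝ) T] T).NeBot := by
        rw [← mem_closure_iff_nhdsWithin_neBot, closure_Ico hT.ne]
        exact hTmem
      refine ge_of_tendsto hcw ?_
      filter_upwards [self_mem_nhdsWithin] with s hs
      exact (hφpos s hs.1 hs.2).le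
    by_contra h
    have hpos : 0 < φ T := lt_of_le_of_ne hnonneg (Ne.symm h)
    have h2 := heq T ⟨hT.le, le_refl T⟩
    simp only [sub_self, mul_zero, Real.exp_zero] at h2
    have h3 : 1 / 2 < stdCdf (φ T) := stdCdf_gt_half hpos
    have h4 : (1:ℝ) ≤ Real.exp ((φ T) ^ 2 / 2) := Real.one_le_exp (by positivity)
    nlinarith [stdCdf_pos (φ T)]
  have hφnonneg : ∀ t ∈ Set.Icc 0 T, 0 ≤ φ t := by
    rintro t ⟨ht0, htT⟩
    rcases eq_or_lt_of_le htT with h | h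
    · rw [h, hφT]
    · exact (hφpos t ht0 h).le
  -- the derivative identity: φ' t * A t = -r * exp (r*(T-t))/2
  have hkey : ∀ t ∈ Set.Icc 0 T,
      φ' t * (φ t * (Real.exp (r * (T - t)) / 2) + 1 / c)
        = -r * Real.exp (r * (T - t)) / 2 := by
    intro t ht
    have hφd := hderiv t ht
    have h1 : HasDerivWithinAt (fun s => (φ s) ^ 2 / 2) (φ t * φ' t) (Set.Icc 0 T) t := by
      have := (hφd.pow 2).div_const 2
      exact this.congr_deriv (by ring)
    have hexp : HasDerivWithinAt (fun s => Real.exp ((φ s) ^ 2 / 2))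
        (Real.exp ((φ t) ^ 2 / 2) * (φ t * φ' t)) (Set.Icc 0 T) t := h1.exp
    have h2 : HasDerivWithinAt (fun s => stdCdf (φ s)) (gpdf (φ t) * φ' t) (Set.Icc 0 T) t :=
      (hasDerivAt_stdCdf (φ t)).comp_hasDerivWithinAt t hφd
    have hprod := hexp.mul h2
    have hL : HasDerivWithinAt (fun s => Real.exp ((φ s) ^ 2 / 2) * stdCdf (φ s))
        (φ' t * (φ t * (Real.exp (r * (T - t)) / 2) + 1 / c)) (Set.Icc 0 T) t := by
      exact hprod.congr_deriv (by
        rw [← heq t ht, ← exp_mul_gpdf (φ t)]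
        ring)
    have hR : HasDerivWithinAt (fun s => Real.exp (r * (T - s)) / 2)
        (-r * Real.exp (r * (T - t)) / 2) (Set.Icc 0 T) t := by
      have ha : HasDerivWithinAt (fun s : ℝ => r * (T - s)) (-r) (Set.Icc 0 T) t := by
        simpa using ((hasDerivWithinAt_id t (Set.Icc 0 T)).const_sub T).const_mul r
      have := (ha.exp).div_const 2
      exact this.congr_deriv (by ring)
    have hL' : HasDerivWithinAt (fun s => Real.exp (r * (T - s)) / 2)
        (φ' t * (φ t * (Real.exp (r * (T - t)) / 2) + 1 / c)) (Set.Icc 0 T) t :=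
      hL.congr (fun s hs => (heq s hs).symm) (heq t ht).symm
    exact (uniqueDiffOn_Icc hT t ht).eq_deriv _ hL' hR
  have hApos : ∀ t ∈ Set.Icc 0 T, 0 < φ t * (Real.exp (r * (T - t)) / 2) + 1 / c := by
    intro t ht
    have := hφnonneg t ht
    have he := Real.exp_pos (r * (T - t))
    positivity
  have hφ'eq : ∀ t ∈ Set.Icc 0 T,
      φ' t = (-r * Real.exp (r * (T - t)) / 2) /
        (φ t * (Real.exp (r * (T - t)) / 2) + 1 / c) := by
    intro t ht
    rw [eq_div_iff (hApos t ht).ne']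
    exact hkey t ht
  have hφ'neg : ∀ t ∈ Set.Icc 0 T, φ' t < 0 := by
    intro t ht
    rw [hφ'eq t ht]
    apply div_neg_of_neg_of_pos _ (hApos t ht)
    have := Real.exp_pos (r * (T - t))
    nlinarith
  refine ⟨?_, ?_, ?_⟩
  · intro t ht0 htT
    have h1 := hφpos t ht0 htT
    have h2 := hφ'neg t ⟨ht0, htT.le⟩
    nlinarith
  · rintro t ⟨ht0, htT⟩
    have hsub : Set.Icc t T ⊆ Set.Icc 0 T := Set.Icc_subset_Icc ht0 (le_refl T)
    have hcontφ' : ContinuousOn φ' (Set.Icc 0 T) := by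
      have : ContinuousOn (fun t => (-r * Real.exp (r * (T - t)) / 2) /
          (φ t * (Real.exp (r * (T - t)) / 2) + 1 / c)) (Set.Icc 0 T) := by
        apply ContinuousOn.div
        · fun_prop
        · apply ContinuousOn.add
          · exact hφcont.mul (by fun_prop)
          · fun_prop
        · intro t ht; exact (hApos t ht).ne'
      exact ContinuousOn.congr this fun t ht => hφ'eq t ht
    have hint : IntervalIntegrable (fun s => 2 * φ s * φ' s) volume t T := by
      apply ContinuousOn.intervalIntegrable
      rw [Set.uIcc_of_le htT]
      exact (continuousOn_const.mul (hφcont.mono hsub)).mul (hcontφ'.mono hsub)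
    have hftc : ∫ s in t..T, 2 * φ s * φ' s = φ T ^ 2 - φ t ^ 2 := by
      apply intervalIntegral.integral_eq_sub_of_hasDeriv_right_of_le htT
      · exact ((hφcont.mono hsub).pow 2)
      · intro x hx
        have hxmem : x ∈ Set.Icc (0:ℝ) T := ⟨ht0.trans hx.1.le, hx.2.le⟩
        have hnd : Set.Icc (0:ℝ) T ∈ 𝓝 x :=
          Icc_mem_nhds (ht0.trans_lt hx.1) hx.2
        have := ((hderiv x hxmem).hasDerivAt hnd).pow 2
        have h2 : HasDerivAt (fun s => φ s ^ 2) (2 * φ x * φ' x) x := by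
          exact this.congr_deriv (by ring)
        exact h2.hasDerivWithinAt
      · exact hint
    have : ∫ s in t..T, -2 * φ s * φ' s = -∫ s in t..T, 2 * φ s * φ' s := by
      rw [← intervalIntegral.integral_neg]
      congr 1; funext s; ring
    rw [this, hftc, hφT]
    ring
  · intro K hK t ht
    have h := heq t ht
    have hs := stdCdf_pos (φ t)
    have hex := Real.exp_pos (r * (T - t))
    rw [eq_div_iff (by positivity)]
    have : Real.exp (-r * (T - t)) * Real.exp (r * (T - t)) = 1 := by
      rw [← Real.exp_add]; ring_nf; exact Real.exp_zero
    linear_combination (2 * K * Real.exp (-r * (T - t))) * h + K * this
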